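/- arXiv:1003.6039 — 2 statements merged into one kernel-verified Lean document; each statement's English description precedes it below -/
import Mathlib

section
/- Let κ_1, …, κ_n be non-negative real numbers with κ_1 ≤ 1. Assume there are a constant A ≥ 0, non-negative numbers A_{k,l} for 1 ≤ l < k ≤ n, and positive numbers σ_2, …, σ_n (set σ_1 := 1) such that for every ε > 0 and every 2 ≤ k ≤ n one has κ_k ≤ A/σ_k + 0.4·ε + (1/(ε·σ_k))·Σ_{l=1}^{k−1} A_{k,l}·κ_l. Let α_n = sup_{2 ≤ k ≤ n} Σ_{l=1}^{k−1} (σ_k/σ_l)·A_{k,l} and α_n' = √(2·α_n·(2·α_n + 5·(A ∨ 1))), and assume α_n > 0. Then κ_n ≤ (1/σ_n) · (5·(A ∨ 1) + 2·α_n + α_n')·(2·α_n + α_n') / (5·α_n'). -/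
open Finset

/-- Lemma 2.10 (recursive/inductive lemma for Kolmogorov bounds). -/
theorem stmt9 (n : ℕ) (hn : 1 ≤ n) (κ σ : ℕ → ℝ) (A : ℝ) (Amat : ℕ → ℕ → ℝ)
    (hκ0 : ∀ k, 1 ≤ k → k ≤ n → 0 ≤ κ k) (hκ1 : κ 1 ≤ 1)
    (hA : 0 ≤ A)
    (hAmat : ∀ k l, 1 ≤ l → l < k → k ≤ n → 0 ≤ Amat k l)
    (hσ1 : σ 1 = 1) (hσ : ∀ k, 2 ≤ k → k ≤ n → 0 < σ k)
    (hrec : ∀ ε : ℝ, 0 < ε → ∀ k, 2 ≤ k → k ≤ n →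
      κ k ≤ A / σ k + 0.4 * ε +
        (1 / (ε * σ k)) * ∑ l ∈ Finset.Icc 1 (k - 1), Amat k l * κ l)
    (αn αn' : ℝ)
    (hαn : αn = sSup {x | ∃ k, 2 ≤ k ∧ k ≤ n ∧
      x = ∑ l ∈ Finset.Icc 1 (k - 1), (σ k / σ l) * Amat k l})
    (hαn' : αn' = Real.sqrt (2 * αn * (2 * αn + 5 * max A 1)))
    (hαpos : 0 < αn) :
    κ n ≤ (1 / σ n) *
      ((5 * max A 1 + 2 * αn + αn') * (2 * αn + αn')) / (5 * αn') := by
  set M := max A 1 with hM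
  have hM1 : (1:ℝ) ≤ M := le_max_right A 1
  have hAM : A ≤ M := le_max_left A 1
  have hpos' : 0 < 2 * αn * (2 * αn + 5 * M) := by nlinarith
  have hα'pos : 0 < αn' := by rw [hαn']; exact Real.sqrt_pos.2 hpos'
  have hsq : αn' ^ 2 = 2 * αn * (2 * αn + 5 * M) := by
    rw [hαn', Real.sq_sqrt hpos'.le]
  set B := (5 * M + 2 * αn + αn') * (2 * αn + αn') / (5 * αn') with hB
  have hBM : B - M = 0.8 * αn * (5 * M + 2 * αn + αn') / αn' := by
    rw [hB]; field_simp; linear_combination hsq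
  have hMB : M ≤ B := by
    rw [← sub_nonneg, hBM]; positivity
  have hBpos : 0 < B := lt_of_lt_of_le (by linarith) hMB
  have hkey : (B - M) ^ 2 = 1.6 * αn * B := by
    have h1 : (B - M) ^ 2 = 0.64 * αn ^ 2 * (5 * M + 2 * αn + αn') ^ 2 / αn' ^ 2 := by
      rw [hBM]; ring
    have h2 : 1.6 * αn * B = 0.64 * αn ^ 2 * (5 * M + 2 * αn + αn') ^ 2 / αn' ^ 2 := by
      rw [hB, eq_div_iff (by positivity : (αn':ℝ) ^ 2 ≠ 0)]
      field_simp
      linear_combination 1.6 * hsq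
    rw [h1, h2]
  -- boundedness of the sup set
  have hbdd : BddAbove {x | ∃ k, 2 ≤ k ∧ k ≤ n ∧
      x = ∑ l ∈ Finset.Icc 1 (k - 1), (σ k / σ l) * Amat k l} := by
    apply Set.Finite.bddAbove
    apply Set.Finite.subset (Set.Finite.image
      (f := fun k => ∑ l ∈ Finset.Icc 1 (k - 1), (σ k / σ l) * Amat k l)
      (Set.finite_Icc 2 n))
    rintro x ⟨k, hk2, hkn, rfl⟩
    exact ⟨k, ⟨hk2, hkn⟩, rfl⟩
  have hsum : ∀ k, 2 ≤ k → k ≤ n →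
      ∑ l ∈ Finset.Icc 1 (k - 1), (σ k / σ l) * Amat k l ≤ αn := by
    intro k hk2 hkn
    rw [hαn]
    exact le_csSup hbdd ⟨k, hk2, hkn, rfl⟩
  have hσpos : ∀ l, 1 ≤ l → l ≤ n → 0 < σ l := by
    intro l h1 h2
    rcases eq_or_lt_of_le h1 with h | h
    · rw [← h, hσ1]; norm_num
    · exact hσ l h h2
  -- main induction
  have main : ∀ k, 1 ≤ k → k ≤ n → σ k * κ k ≤ B := by
    intro k
    induction k using Nat.strong_induction_on with
    | _ k ih =>
      intro hk1 hkn
      rcases eq_or_lt_of_le hk1 with h1 | hk2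
      · rw [← h1, hσ1, one_mul]
        exact hκ1.trans (hM1.trans hMB)
      · have hσk := hσ k hk2 hkn
        set s := Real.sqrt (B * αn / 0.4) with hs
        have hspos : 0 < s := Real.sqrt_pos.2 (by positivity)
        have hssq : s ^ 2 = B * αn / 0.4 := Real.sq_sqrt (by positivity)
        have hεpos : 0 < s / σ k := div_pos hspos hσk
        have hrk := hrec (s / σ k) hεpos k hk2 hkn
        have hS : ∑ l ∈ Finset.Icc 1 (k-1), Amat k l * κ l ≤ B * αn / σ k := by
          have h1 : ∑ l ∈ Finset.Icc 1 (k-1), Amat k l * κ l ≤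
              ∑ l ∈ Finset.Icc 1 (k-1), (B / σ k) * ((σ k / σ l) * Amat k l) := by
            apply Finset.sum_le_sum
            intro l hl
            simp only [Finset.mem_Icc] at hl
            have hl1 : 1 ≤ l := hl.1
            have hlk : l < k := lt_of_le_of_lt hl.2 (Nat.sub_lt (by omega) one_pos)
            have hln : l ≤ n := le_trans (le_of_lt hlk) hkn
            have hσl := hσpos l hl1 hln
            have hκl : σ l * κ l ≤ B := ih l hlk hl1 hln
            have hAm := hAmat k l hl1 hlk hkn
            have : Amat k l * κ l ≤ Amat k l * (B / σ l) := by
              apply mul_le_mul_of_nonneg_left _ hAm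
              rw [le_div_iff₀ hσl]; linarith [hκl]
            calc Amat k l * κ l ≤ Amat k l * (B / σ l) := this
              _ = (B / σ k) * ((σ k / σ l) * Amat k l) := by field_simp
          calc ∑ l ∈ Finset.Icc 1 (k-1), Amat k l * κ l
              ≤ ∑ l ∈ Finset.Icc 1 (k-1), (B / σ k) * ((σ k / σ l) * Amat k l) := h1
            _ = (B / σ k) * ∑ l ∈ Finset.Icc 1 (k-1), (σ k / σ l) * Amat k l := by
                rw [Finset.mul_sum]
            _ ≤ (B / σ k) * αn := by
                apply mul_le_mul_of_nonneg_left (hsum k hk2 hkn) (by positivity)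
            _ = B * αn / σ k := by ring
        -- combine
        have hεσ : s / σ k * σ k = s := div_mul_cancel₀ s (ne_of_gt hσk)
        have hstep : σ k * κ k ≤ A + 0.4 * s + B * αn / s := by
          have h2 : σ k * κ k ≤ σ k * (A / σ k + 0.4 * (s / σ k) +
              (1 / (s / σ k * σ k)) * ∑ l ∈ Finset.Icc 1 (k-1), Amat k l * κ l) :=
            mul_le_mul_of_nonneg_left hrk hσk.le
          rw [hεσ] at h2
          have h3 : σ k * (A / σ k + 0.4 * (s / σ k) +
              (1 / s) * ∑ l ∈ Finset.Icc 1 (k-1), Amat k l * κ l)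
              = A + 0.4 * s + (1 / s) * (σ k * ∑ l ∈ Finset.Icc 1 (k-1), Amat k l * κ l) := by
            field_simp
          rw [h3] at h2
          have h4 : (1 / s) * (σ k * ∑ l ∈ Finset.Icc 1 (k-1), Amat k l * κ l)
              ≤ (1 / s) * (σ k * (B * αn / σ k)) := by
            apply mul_le_mul_of_nonneg_left _ (by positivity)
            exact mul_le_mul_of_nonneg_left hS hσk.le
          have h5 : σ k * (B * αn / σ k) = B * αn := by field_simp
          rw [h5] at h4
          have h6 : (1 / s) * (B * αn) = B * αn / s := by ring
          rw [h6] at h4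
          linarith
        have h08 : 0.4 * s + B * αn / s ≤ B - M := by
          have hBα : B * αn / s = 0.4 * s := by
            rw [eq_comm, eq_div_iff (ne_of_gt hspos)]
            linear_combination 0.4 * hssq
          rw [hBα]
          have : (0.8 * s) ^ 2 = (B - M) ^ 2 := by
            rw [hkey]; linear_combination 0.64 * hssq
          nlinarith [hspos, sub_nonneg.2 hMB]
        linarith
  -- conclude
  have hσn : 0 < σ n := hσpos n hn le_rfl
  have hmain := main n hn le_rfl
  have hgoal : (1 / σ n) * ((5 * M + 2 * αn + αn') * (2 * αn + αn')) / (5 * αn') = B / σ n := by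
    rw [hB]; field_simp
  rw [hgoal, le_div_iff₀ hσn]
  linarith [hmain]
end

section
/- Let (W, W', G) be a Stein coupling and suppose ρ : ℝ → ℝ is a locally integrable function satisfying E[W·f(W)] = ∫_ℝ f'(u)·ρ(u) du for every bounded Lipschitz function f : ℝ → ℝ (with f' its almost-everywhere derivative). Then for Lebesgue-almost every u ∈ ℝ, E[ G·( 1[W ≤ u < W'] − 1[W' ≤ u < W] ) ] = ρ(u). -/
open MeasureTheory ProbabilityTheory Set
open scoped ENNReal Classical

noncomputable section

variable {Ω : Type*} [MeasurableSpace Ω]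

/-- A triple `(W, W', G)` of square-integrable random variables is a *Stein coupling* if
`E[G f(W') − G f(W)] = E[W f(W)]` for every Lipschitz `f` for which the expectations exist. -/
def SteinCoupling (μ : Measure Ω) (W W' G : Ω → ℝ) : Prop :=
  MemLp W 2 μ ∧ MemLp W' 2 μ ∧ MemLp G 2 μ ∧
  ∀ f : ℝ → ℝ, (∃ K : NNReal, LipschitzWith K f) →
    Integrable (fun ω => G ω * f (W' ω)) μ →
    Integrable (fun ω => G ω * f (W ω)) μ →
    Integrable (fun ω => W ω * f (W ω)) μ →
    ∫ ω, (G ω * f (W' ω) - G ω * f (W ω)) ∂μ = ∫ ω, W ω * f (W ω) ∂μ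

lemma aux_ind_integral (g : ℝ → ℝ) (hgi : Integrable g volume) (a b : ℝ) :
    (∫ u, g u * ((if a ≤ u ∧ u < b then (1:ℝ) else 0) -
      (if b ≤ u ∧ u < a then (1:ℝ) else 0))) = ∫ u in a..b, g u := by
  have h1 : (fun u => g u * ((if a ≤ u ∧ u < b then (1:ℝ) else 0) -
      (if b ≤ u ∧ u < a then (1:ℝ) else 0)))
      = fun u => (Ico a b).indicator g u - (Ico b a).indicator g u := by
    funext u
    simp only [indicator_apply, mem_Ico]
    split_ifs <;> ring
  rw [h1, integral_sub (hgi.indicator measurableSet_Ico) (hgi.indicator measurableSet_Ico),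
    integral_indicator measurableSet_Ico, integral_indicator measurableSet_Ico]
  rcases le_or_gt a b with hab | hab
  · rw [Ico_eq_empty (not_lt.mpr hab), setIntegral_empty, sub_zero,
      integral_Ico_eq_integral_Ioo, intervalIntegral.integral_of_le hab,
      integral_Ioc_eq_integral_Ioo]
  · rw [Ico_eq_empty (not_lt.mpr hab.le), setIntegral_empty, zero_sub,
      intervalIntegral.integral_symm, intervalIntegral.integral_of_le hab.le,
      integral_Ico_eq_integral_Ioo, integral_Ioc_eq_integral_Ioo]

/-- Lemma 5.1: if `ρ` is a (zero-bias) density, i.e. `E[W f(W)] = ∫ f' ρ` for all bounded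
Lipschitz `f`, then for almost every `u`,
`E[G (1[W ≤ u < W'] − 1[W' ≤ u < W])] = ρ(u)`. -/
theorem stmt14 (μ : Measure Ω) [IsProbabilityMeasure μ] (W W' G : Ω → ℝ)
    (hSC : SteinCoupling μ W W' G)
    (ρ : ℝ → ℝ) (hρloc : LocallyIntegrable ρ volume)
    (hρ : ∀ (f f' : ℝ → ℝ), (∃ K : NNReal, LipschitzWith K f) →
      (∃ B : ℝ, ∀ x, |f x| ≤ B) →
      (∀ᵐ x ∂(volume : Measure ℝ), HasDerivAt f (f' x) x) →
      ∫ ω, W ω * f (W ω) ∂μ = ∫ x, f' x * ρ x) :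
    ∀ᵐ u ∂(volume : Measure ℝ),
      (∫ ω, G ω * ((if W ω ≤ u ∧ u < W' ω then (1 : ℝ) else 0) -
        (if W' ω ≤ u ∧ u < W ω then (1 : ℝ) else 0)) ∂μ) = ρ u := by
  obtain ⟨hWp, hW'p, hGp, hstein⟩ := hSC
  have one_le_two : (1 : ℝ≥0∞) ≤ 2 := by norm_num
  have hGint : Integrable G μ := hGp.integrable one_le_two
  have hWint : Integrable W μ := hWp.integrable one_le_two
  have hWm := hWp.aestronglyMeasurable
  have hW'm := hW'p.aestronglyMeasurable
  have hGm := hGp.aestronglyMeasurable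
  set W₀ := hWm.mk W with hW₀def
  set W₁ := hW'm.mk W' with hW₁def
  set G₀ := hGm.mk G with hG₀def
  have hW₀ : StronglyMeasurable W₀ := hWm.stronglyMeasurable_mk
  have hW₁ : StronglyMeasurable W₁ := hW'm.stronglyMeasurable_mk
  have hG₀ : StronglyMeasurable G₀ := hGm.stronglyMeasurable_mk
  have hWae : W =ᵐ[μ] W₀ := hWm.ae_eq_mk
  have hW'ae : W' =ᵐ[μ] W₁ := hW'm.ae_eq_mk
  have hGae : G =ᵐ[μ] G₀ := hGm.ae_eq_mk
  have hG₀int : Integrable G₀ μ := hGint.congr hGae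
  -- the jointly measurable integrand
  set D : ℝ → Ω → ℝ := fun u ω =>
    (if W₀ ω ≤ u ∧ u < W₁ ω then (1:ℝ) else 0) - (if W₁ ω ≤ u ∧ u < W₀ ω then (1:ℝ) else 0)
    with hDdef
  have hDbd : ∀ u ω, |D u ω| ≤ 1 := by
    intro u ω
    simp only [hDdef]
    split_ifs <;> norm_num
  have hDmeas : StronglyMeasurable (fun p : ℝ × Ω => G₀ p.2 * D p.1 p.2) := by
    have hs1 : MeasurableSet {p : ℝ × Ω | W₀ p.2 ≤ p.1 ∧ p.1 < W₁ p.2} :=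
      (measurableSet_le (hW₀.measurable.comp measurable_snd) measurable_fst).inter
        (measurableSet_lt measurable_fst (hW₁.measurable.comp measurable_snd))
    have hs2 : MeasurableSet {p : ℝ × Ω | W₁ p.2 ≤ p.1 ∧ p.1 < W₀ p.2} :=
      (measurableSet_le (hW₁.measurable.comp measurable_snd) measurable_fst).inter
        (measurableSet_lt measurable_fst (hW₀.measurable.comp measurable_snd))
    have : Measurable (fun p : ℝ × Ω => G₀ p.2 * D p.1 p.2) := by
      apply Measurable.mul (hG₀.measurable.comp measurable_snd)
      exact ((Measurable.ite hs1 measurable_const measurable_const).sub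
        (Measurable.ite hs2 measurable_const measurable_const))
    exact this.stronglyMeasurable
  set h : ℝ → ℝ := fun u => ∫ ω, G₀ ω * D u ω ∂μ with hhdef
  have hInt : ∀ u, Integrable (fun ω => G₀ ω * D u ω) μ := by
    intro u
    refine Integrable.mono' hG₀int.norm ?_ (Filter.Eventually.of_forall fun ω => ?_)
    · exact (hDmeas.comp_measurable (measurable_prodMk_left : Measurable fun ω : Ω => (u, ω))).aestronglyMeasurable
    · calc ‖G₀ ω * D u ω‖ = ‖G₀ ω‖ * |D u ω| := by rw [norm_mul]; rfl
        _ ≤ ‖G₀ ω‖ * 1 := by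
            exact mul_le_mul_of_nonneg_left (hDbd u ω) (norm_nonneg _)
        _ = ‖G₀ ω‖ := mul_one _
  have hbound : ∀ u, ‖h u‖ ≤ ∫ ω, ‖G₀ ω‖ ∂μ := by
    intro u
    refine le_trans (norm_integral_le_integral_norm _) ?_
    refine integral_mono (hInt u).norm hG₀int.norm fun ω => ?_
    calc ‖G₀ ω * D u ω‖ = ‖G₀ ω‖ * |D u ω| := by rw [norm_mul]; rfl
      _ ≤ ‖G₀ ω‖ * 1 := mul_le_mul_of_nonneg_left (hDbd u ω) (norm_nonneg _)
      _ = ‖G₀ ω‖ := mul_one _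
  have hhm : StronglyMeasurable h := hDmeas.integral_prod_right'
  have hloc : LocallyIntegrable h volume := by
    rw [locallyIntegrable_iff]
    intro K hK
    exact Measure.integrableOn_of_bounded hK.measure_lt_top.ne
      hhm.aestronglyMeasurable (Filter.Eventually.of_forall fun u => hbound u)
  have h_eq : ∀ u, (∫ ω, G ω * ((if W ω ≤ u ∧ u < W' ω then (1 : ℝ) else 0) -
        (if W' ω ≤ u ∧ u < W ω then (1 : ℝ) else 0)) ∂μ) = h u := by
    intro u
    refine integral_congr_ae ?_
    filter_upwards [hWae, hW'ae, hGae] with ω h1 h2 h3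
    simp only [hDdef, h1, h2, h3]
  have main : ∀ᵐ u ∂(volume : Measure ℝ), h u = ρ u := by
    apply ae_eq_of_integral_contDiff_smul_eq hloc hρloc
    intro g hgdiff hgsupp
    have hgc : Continuous g := hgdiff.continuous
    have hgint : Integrable g volume := hgc.integrable_of_hasCompactSupport hgsupp
    obtain ⟨C, hC⟩ := hgsupp.exists_bound_of_continuous hgc
    have hC0 : 0 ≤ C := le_trans (norm_nonneg _) (hC 0)
    set f : ℝ → ℝ := fun x => ∫ t in (0:ℝ)..x, g t with hfdef
    have hfsub : ∀ a b : ℝ, f b - f a = ∫ t in a..b, g t := by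
      intro a b
      have := intervalIntegral.integral_add_adjacent_intervals
        (hgc.intervalIntegrable (μ := volume) 0 a) (hgc.intervalIntegrable (μ := volume) a b)
      simp only [hfdef]
      linarith
    have hflip : LipschitzWith C.toNNReal f := by
      refine LipschitzWith.of_dist_le_mul fun x y => ?_
      rw [Real.dist_eq, Real.dist_eq]
      have h1 : f x - f y = ∫ t in y..x, g t := hfsub y x
      have h2 : ‖∫ t in y..x, g t‖ ≤ C * |x - y| :=
        intervalIntegral.norm_integral_le_of_norm_le_const fun t _ => hC t
      rw [Real.coe_toNNReal C hC0]
      calc |f x - f y| = ‖∫ t in y..x, g t‖ := by rw [h1]; rfl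
        _ ≤ C * |x - y| := h2
    have hfbdd : ∀ x, |f x| ≤ ∫ t, ‖g t‖ := by
      intro x
      calc |f x| = ‖∫ t in (0:ℝ)..x, g t‖ := rfl
        _ ≤ ∫ t in Set.uIoc (0:ℝ) x, ‖g t‖ := intervalIntegral.norm_integral_le_integral_norm_uIoc
        _ ≤ ∫ t, ‖g t‖ := setIntegral_le_integral hgint.norm
            (Filter.Eventually.of_forall fun t => norm_nonneg _)
    have hfderiv : ∀ x, HasDerivAt f (g x) x := by
      intro x
      exact intervalIntegral.integral_hasDerivAt_right (hgc.intervalIntegrable 0 x)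
        (hgc.stronglyMeasurable.stronglyMeasurableAtFilter) hgc.continuousAt
    have hfc : Continuous f := hflip.continuous
    -- integrability of the three expectations
    have mk_int : ∀ (X : Ω → ℝ) (Y : Ω → ℝ), Integrable X μ → AEStronglyMeasurable Y μ →
        Integrable (fun ω => X ω * f (Y ω)) μ := by
      intro X Y hX hY
      refine Integrable.mono' (hX.norm.mul_const (∫ t, ‖g t‖)) ?_
        (Filter.Eventually.of_forall fun ω => ?_)
      · exact hX.aestronglyMeasurable.mul (hfc.comp_aestronglyMeasurable hY)
      · calc ‖X ω * f (Y ω)‖ = ‖X ω‖ * |f (Y ω)| := by rw [norm_mul]; rfl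
          _ ≤ ‖X ω‖ * ∫ t, ‖g t‖ := mul_le_mul_of_nonneg_left (hfbdd _) (norm_nonneg _)
    have hint1 : Integrable (fun ω => G ω * f (W' ω)) μ := mk_int G W' hGint hW'm
    have hint2 : Integrable (fun ω => G ω * f (W ω)) μ := mk_int G W hGint hWm
    have hint3 : Integrable (fun ω => W ω * f (W ω)) μ := mk_int W W hWint hWm
    -- Fubini
    have hFub : Integrable (Function.uncurry fun u ω => g u * (G₀ ω * D u ω))
        ((volume : Measure ℝ).prod μ) := by
      refine Integrable.mono' ((hgint.norm).mul_prod hG₀int.norm) ?_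
        (Filter.Eventually.of_forall fun p => ?_)
      · exact ((hgc.measurable.comp measurable_fst).stronglyMeasurable.mul hDmeas).aestronglyMeasurable
      · calc ‖Function.uncurry (fun u ω => g u * (G₀ ω * D u ω)) p‖
            = ‖g p.1‖ * (‖G₀ p.2‖ * |D p.1 p.2|) := by
              simp [Function.uncurry, norm_mul, abs_mul]
          _ ≤ ‖g p.1‖ * (‖G₀ p.2‖ * 1) := by
              refine mul_le_mul_of_nonneg_left ?_ (norm_nonneg _)
              exact mul_le_mul_of_nonneg_left (hDbd _ _) (norm_nonneg _)
          _ = ‖g p.1‖ * ‖G₀ p.2‖ := by ring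
    have swap := integral_integral_swap hFub
    have step1 : ∫ u, g u * h u = ∫ ω, G₀ ω * (f (W₁ ω) - f (W₀ ω)) ∂μ := by
      have l1 : ∫ u, g u * h u = ∫ u, ∫ ω, g u * (G₀ ω * D u ω) ∂μ := by
        refine integral_congr_ae (Filter.Eventually.of_forall fun u => ?_)
        show g u * (∫ ω, G₀ ω * D u ω ∂μ) = ∫ ω, g u * (G₀ ω * D u ω) ∂μ
        rw [← integral_const_mul]
      have l2 : ∀ ω, (∫ u, g u * (G₀ ω * D u ω)) = G₀ ω * (f (W₁ ω) - f (W₀ ω)) := by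
        intro ω
        have : (fun u => g u * (G₀ ω * D u ω)) = fun u => G₀ ω * (g u * D u ω) := by
          funext u; ring
        rw [this, integral_const_mul, hfsub, aux_ind_integral g hgint]
      rw [l1, swap]
      exact integral_congr_ae (Filter.Eventually.of_forall fun ω => l2 ω)
    have step2 : ∫ ω, G₀ ω * (f (W₁ ω) - f (W₀ ω)) ∂μ
        = ∫ ω, (G ω * f (W' ω) - G ω * f (W ω)) ∂μ := by
      refine integral_congr_ae ?_
      filter_upwards [hWae, hW'ae, hGae] with ω h1 h2 h3
      rw [← h1, ← h2, ← h3]; ring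
    have step3 : ∫ ω, (G ω * f (W' ω) - G ω * f (W ω)) ∂μ = ∫ ω, W ω * f (W ω) ∂μ :=
      hstein f ⟨C.toNNReal, hflip⟩ hint1 hint2 hint3
    have step4 : ∫ ω, W ω * f (W ω) ∂μ = ∫ x, g x * ρ x :=
      hρ f g ⟨C.toNNReal, hflip⟩ ⟨∫ t, ‖g t‖, hfbdd⟩
        (Filter.Eventually.of_forall hfderiv)
    simp only [smul_eq_mul]
    rw [step1, step2, step3, step4]
  filter_upwards [main] with u hu
  rw [h_eq u, hu]
end
end
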